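/- If a change-factor node θ has no edge to the reward node r_{t+1} and no directed path through states to any future reward r_{t+τ}, then θ is independent of the action a_t conditional on the cumulative reward R_{t+1}, under the Markov condition. -/

import Mathlib

/-- Nodes of the unrolled DBN augmented with a change-factor node `θ` and the
cumulative future reward nodes `R_t`. -/
inductive RLNode (ι : Type*) where
  | state (i : ι) (t : ℕ)
  | action (t : ℕ)
  | reward (t : ℕ)
  | cum (t : ℕ)
  | theta

/-- Edges: the structural masks as before; the change factor `θ` is a constant
per-domain parameter node whose only possible edges go into state components
(`ThetaS i`: `θ → s_{i,t}` for all `t`) or into the reward (`ThetaR`: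
`θ → r_t` for all `t`); `a_t` has edges only into `s_{·,t+1}` and `r_{t+1}`;
`R_v` is a collider child of all rewards `r_u`, `u ≥ v`. -/
def RLEdge {ι : Type*} (Sedge : ι → ι → Prop) (Aedge Redge : ι → Prop)
    (ThetaS : ι → Prop) (ThetaR : Prop) :
    RLNode ι → RLNode ι → Prop
  | RLNode.state i t, RLNode.state j t' => t' = t + 1 ∧ Sedge i j
  | RLNode.state i t, RLNode.reward t' => t' = t + 1 ∧ Redge i
  | RLNode.action t, RLNode.state j t' => t' = t + 1 ∧ Aedge j
  | RLNode.action t, RLNode.reward t' => t' = t + 1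
  | RLNode.reward u, RLNode.cum v => v ≤ u
  | RLNode.theta, RLNode.state i _ => ThetaS i
  | RLNode.theta, RLNode.reward _ => ThetaR
  | _, _ => False

def Adjacent {V : Type*} (E : V → V → Prop) (a b : V) : Prop := E a b ∨ E b a

def IsWalkBetween {V : Type*} (E : V → V → Prop) (p : List V) (x y : V) : Prop :=
  List.Chain' (Adjacent E) p ∧ p.head? = some x ∧ p.getLast? = some y

def Descendant {V : Type*} (E : V → V → Prop) (a b : V) : Prop :=
  Relation.ReflTransGen E a b

def Blocked {V : Type*} (E : V → V → Prop) (Z : Set V) (p : List V) : Prop :=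
  ∃ (l₁ l₂ : List V) (i m j : V), p = l₁ ++ i :: m :: j :: l₂ ∧
    ((¬(E i m ∧ E j m) ∧ m ∈ Z) ∨
      (E i m ∧ E j m ∧ ∀ w, Descendant E m w → w ∉ Z))

def DSep {V : Type*} (E : V → V → Prop) (x y : V) (Z : Set V) : Prop :=
  ∀ p, IsWalkBetween E p x y → Blocked E Z p

section Aux
variable {ι : Type*} {Sedge : ι → ι → Prop} {Aedge Redge : ι → Prop}
    {ThetaS : ι → Prop} {ThetaR : Prop}

local notation "E" => RLEdge Sedge Aedge Redge ThetaS ThetaR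

lemma blocked_prepend {V : Type*} {Ed : V → V → Prop} {Z : Set V} {q : List V}
    (h : Blocked Ed Z q) (l : List V) : Blocked Ed Z (l ++ q) := by
  obtain ⟨l₁, l₂, i, m, j, rfl, hb⟩ := h
  exact ⟨l ++ l₁, l₂, i, m, j, by simp, hb⟩

lemma no_in_theta (a : RLNode ι) : ¬ E a RLNode.theta := by
  cases a <;> exact fun h => h

lemma desc_is_state (no_edge_to_reward : ¬ ThetaR)
    (no_path_to_reward : ∀ u : ℕ,
      ¬ Relation.TransGen E RLNode.theta (RLNode.reward u))
    {w : RLNode ι} (h : Relation.TransGen E RLNode.theta w) :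
    ∃ i t', w = RLNode.state i t' := by
  induction h with
  | single hb =>
    rename_i c
    cases c with
    | state i t' => exact ⟨i, t', rfl⟩
    | reward u => exact absurd hb no_edge_to_reward
    | action _ => exact hb.elim
    | cum _ => exact hb.elim
    | theta => exact hb.elim
  | tail hb he ih =>
    rename_i b c
    obtain ⟨i, t', rfl⟩ := ih
    cases c with
    | state j t'' => exact ⟨j, t'', rfl⟩
    | reward u => exact absurd (hb.tail he) (no_path_to_reward u)
    | action _ => exact he.elim
    | cum _ => exact he.elim
    | theta => exact he.elim

lemma key (no_edge_to_reward : ¬ ThetaR)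
    (no_path_to_reward : ∀ u : ℕ,
      ¬ Relation.TransGen E RLNode.theta (RLNode.reward u)) (t : ℕ) :
    ∀ (q : List (RLNode ι)) (a b : RLNode ι),
      Relation.TransGen E RLNode.theta b → E a b →
      List.Chain' (Adjacent E) (a :: b :: q) →
      (a :: b :: q).getLast? = some (RLNode.action t) →
      Blocked E {RLNode.cum (t + 1)} (a :: b :: q) := by
  intro q
  induction q with
  | nil =>
    intro a b htg _ _ hlast
    simp at hlast
    obtain ⟨i, t', hb⟩ := desc_is_state no_edge_to_reward no_path_to_reward htg
    rw [hlast] at hb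
    exact nomatch hb
  | cons c q' ih =>
    intro a b htg hab hchain hlast
    replace hchain := List.isChain_cons_cons.mp hchain
    obtain ⟨_, hchain⟩ := hchain
    have hbc : Adjacent E b c := (List.isChain_cons_cons.mp hchain).1
    cases hbc with
    | inl hbc =>
      have : Blocked E {RLNode.cum (t + 1)} (b :: c :: q') :=
        ih b c (htg.tail hbc) hbc hchain (by simpa using hlast)
      exact blocked_prepend this [a]
    | inr hcb =>
      refine ⟨[], q', a, b, c, rfl, Or.inr ⟨hab, hcb, ?_⟩⟩
      intro w hw hwZ
      rw [Set.mem_singleton_iff] at hwZ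
      subst hwZ
      obtain ⟨i, t', h⟩ := desc_is_state no_edge_to_reward no_path_to_reward
        (Relation.TransGen.trans_left htg hw)
      exact nomatch h

end Aux

/-- If the change-factor node `θ` has no edge to the reward
node and no directed path through states to any future reward, then `θ` is
independent of the action `a_t` conditional on the cumulative reward
`R_{t+1}`, under the Markov condition (d-separation implies conditional
independence). -/
theorem theta_indep_action_given_cumulative_reward
    {ι : Type*} (Sedge : ι → ι → Prop) (Aedge Redge : ι → Prop)
    (ThetaS : ι → Prop) (ThetaR : Prop)
    (CI : RLNode ι → RLNode ι → Set (RLNode ι) → Prop)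
    (markov : ∀ x y Z,
      DSep (RLEdge Sedge Aedge Redge ThetaS ThetaR) x y Z → CI x y Z)
    (no_edge_to_reward : ¬ ThetaR)
    (no_path_to_reward : ∀ u : ℕ,
      ¬ Relation.TransGen (RLEdge Sedge Aedge Redge ThetaS ThetaR)
          RLNode.theta (RLNode.reward u))
    (t : ℕ) :
    CI RLNode.theta (RLNode.action t) {RLNode.cum (t + 1)} := by
  apply markov
  intro p ⟨hchain, hhead, hlast⟩
  match p, hhead with
  | RLNode.theta :: rest, _ =>
    match rest with
    | [] =>
      simp at hlast
    | b :: q =>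
      have hadj : Adjacent (RLEdge Sedge Aedge Redge ThetaS ThetaR)
          RLNode.theta b := (List.isChain_cons_cons.mp hchain).1
      cases hadj with
      | inl h =>
        exact key no_edge_to_reward no_path_to_reward t q RLNode.theta b
          (Relation.TransGen.single h) h hchain hlast
      | inr h => exact absurd h (no_in_theta b)
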